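/- For d ≥ 1, 0 ≤ k ≤ d, and 0 ≤ r ≤ d, the number of pairs (S, σ) with S a k-subset of {1,...,d}, σ ∈ S_{d+1}, D(σ) ⊆ S, and σ(d+1) = d+1-r equals Σ_{j=k}^{d} binom(d-r, d-j) · S(j,k) · k!. -/

import Mathlib

open Finset

/-- The set of descent positions (0-based: `k ∈ descSet σ` means a descent between
the 1-based positions `k+1` and `k+2`) of a permutation of `Fin n`. -/
def descSet {n : ℕ} (σ : Equiv.Perm (Fin n)) : Finset (Fin n) :=
  Finset.univ.filter (fun k => ∃ m : Fin n, (m : ℕ) = (k : ℕ) + 1 ∧ σ m < σ k)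

/-- The number of descents of a permutation of `Fin n`. -/
def des {n : ℕ} (σ : Equiv.Perm (Fin n)) : ℕ := (descSet σ).card

/-- `A d i j` : the number of permutations `σ` of `{1,…,d}` with `σ(1) = j` and
exactly `i` descents (in particular `A d i j = 0` for `i < 0` or `i ≥ d`). -/
noncomputable def A (d : ℕ) (i : ℤ) (j : ℕ) : ℕ :=
  Nat.card {σ : Equiv.Perm (Fin d) //
    (∀ k : Fin d, (k : ℕ) = 0 → (σ k : ℕ) + 1 = j) ∧ (des σ : ℤ) = i}

/-- The Stirling numbers of the second kind `S(n,k)`. -/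
def stirling : ℕ → ℕ → ℕ
  | 0, 0 => 1
  | 0, _ + 1 => 0
  | _ + 1, 0 => 0
  | n + 1, k + 1 => (k + 1) * stirling n (k + 1) + stirling n k

open Function

lemma stirling_eq_zero_of_lt : ∀ {n k : ℕ}, n < k → stirling n k = 0
  | 0, 0, h => by omega
  | 0, k + 1, _ => rfl
  | n + 1, 0, h => by omega
  | n + 1, k + 1, h => by
    have h1 : n < k + 1 := by omega
    have h2 : n < k := by omega
    simp [stirling, stirling_eq_zero_of_lt h1, stirling_eq_zero_of_lt h2]


lemma succAbove_get {k : ℕ} (c x : Fin (k + 1)) (h : ((finSuccEquiv' c) x).isSome) :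
    c.succAbove (((finSuccEquiv' c) x).get h) = x := by
  rw [← finSuccEquiv'_symm_some c (((finSuccEquiv' c) x).get h), Option.some_get]
  exact (finSuccEquiv' c).symm_apply_apply x

/-- The key recursion equiv. -/
def surjEquiv (n k : ℕ) :
    {f : Fin (n + 1) → Fin (k + 1) // Surjective f} ≃
      Fin (k + 1) × ({f : Fin n → Fin (k + 1) // Surjective f} ⊕
        {f : Fin n → Fin k // Surjective f}) where
  toFun := fun ⟨f, hf⟩ =>
    ⟨f (Fin.last n),
      if h : Surjective (f ∘ Fin.castSucc) then Sum.inl ⟨f ∘ Fin.castSucc, h⟩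
      else Sum.inr ⟨fun i => ((finSuccEquiv' (f (Fin.last n))) (f i.castSucc)).get (by
          rw [Option.isSome_iff_ne_none]
          intro hnone
          have : f i.castSucc = f (Fin.last n) := by
            have := congrArg (finSuccEquiv' (f (Fin.last n))).symm hnone
            simpa [finSuccEquiv'_symm_none] using this
          -- then f ∘ castSucc surjective, contradiction
          apply h
          intro c
          rcases hf c with ⟨m, hm⟩
          rcases Fin.lastCases (motive := fun m => f m = c → ∃ a, (f ∘ Fin.castSucc) a = c)
            (fun hm => ⟨i, by simpa [this] using hm⟩) (fun j hm => ⟨j, hm⟩) m hm with ⟨a, ha⟩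
          exact ⟨a, ha⟩),
        by
          intro j
          have hne : (f (Fin.last n)).succAbove j ≠ f (Fin.last n) := Fin.succAbove_ne _ _
          rcases hf ((f (Fin.last n)).succAbove j) with ⟨m, hm⟩
          have hmne : m ≠ Fin.last n := by rintro rfl; exact hne hm.symm
          obtain ⟨i, rfl⟩ : ∃ i : Fin n, i.castSucc = m := by
            rcases Fin.lastCases (motive := fun m => m ≠ Fin.last n → ∃ i : Fin n, i.castSucc = m)
              (fun h => absurd rfl h) (fun i _ => ⟨i, rfl⟩) m hmne with ⟨i, hi⟩
            exact ⟨i, hi⟩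
          refine ⟨i, ?_⟩
          simp only [hm, finSuccEquiv'_succAbove]
          rfl⟩⟩
  invFun := fun ⟨c, s⟩ =>
    match s with
    | Sum.inl ⟨f₀, h₀⟩ => ⟨Fin.snoc f₀ c, by
        intro b
        rcases h₀ b with ⟨i, hi⟩
        exact ⟨i.castSucc, by simpa using hi⟩⟩
    | Sum.inr ⟨g, hg⟩ => ⟨Fin.snoc (fun i => c.succAbove (g i)) c, by
        intro b
        rcases eq_or_ne b c with rfl | hb
        · exact ⟨Fin.last n, by simp⟩
        · rcases Fin.exists_succAbove_eq hb with ⟨j, hj⟩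
          rcases hg j with ⟨i, hi⟩
          exact ⟨i.castSucc, by simp [hi, hj]⟩⟩
  left_inv := by
    rintro ⟨f, hf⟩
    by_cases h : Surjective (f ∘ Fin.castSucc)
    · simp only [dif_pos h]
      ext m
      refine Fin.lastCases ?_ (fun i => ?_) m <;> simp
    · simp only [dif_neg h]
      ext m
      refine Fin.lastCases ?_ (fun i => ?_) m
      · simp
      · simp only [Fin.snoc_castSucc]
        exact congrArg Fin.val (succAbove_get _ _ _)
  right_inv := by
    rintro ⟨c, s⟩
    match s with
    | Sum.inl ⟨f₀, h₀⟩ =>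
      have hc : (Fin.snoc f₀ c : Fin (n+1) → Fin (k+1)) ∘ Fin.castSucc = f₀ := by
        ext i; simp
      have hs : Surjective ((Fin.snoc f₀ c : Fin (n+1) → Fin (k+1)) ∘ Fin.castSucc) := by
        rw [hc]; exact h₀
      simp only [Fin.snoc_last, dif_pos hs]
      refine Prod.ext rfl ?_
      simp only
      congr 1
      exact Subtype.ext hc
    | Sum.inr ⟨g, hg⟩ =>
      have hc : ∀ i : Fin n,
          (Fin.snoc (fun i => c.succAbove (g i)) c : Fin (n+1) → Fin (k+1)) i.castSucc
            = c.succAbove (g i) := by intro i; simp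
      have hns : ¬ Surjective
          ((Fin.snoc (fun i => c.succAbove (g i)) c : Fin (n+1) → Fin (k+1)) ∘ Fin.castSucc) := by
        intro hsurj
        rcases hsurj c with ⟨i, hi⟩
        rw [Function.comp_apply, hc i] at hi
        exact Fin.succAbove_ne c (g i) hi
      simp only [Fin.snoc_last, dif_neg hns]
      refine Prod.ext rfl ?_
      simp only
      congr 1
      refine Subtype.ext (funext fun i => ?_)
      simp only [hc i, finSuccEquiv'_succAbove]
      rfl

lemma card_surj_fin (n k : ℕ) :
    Fintype.card {f : Fin n → Fin k // Surjective f} = stirling n k * k.factorial := by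
  induction n generalizing k with
  | zero =>
    cases k with
    | zero =>
      have : Unique {f : Fin 0 → Fin 0 // Surjective f} :=
        ⟨⟨⟨finZeroElim, fun b => b.elim0⟩⟩, fun f => Subtype.ext (funext fun i => i.elim0)⟩
      simp [Fintype.card_unique, stirling]
    | succ k =>
      have : IsEmpty {f : Fin 0 → Fin (k + 1) // Surjective f} := by
        constructor; rintro ⟨f, hf⟩; rcases hf 0 with ⟨i, _⟩; exact i.elim0
      simp [Fintype.card_eq_zero, stirling]
  | succ n ih =>
    cases k with
    | zero =>
      have : IsEmpty {f : Fin (n + 1) → Fin 0 // Surjective f} := by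
        constructor; rintro ⟨f, _⟩; exact (f 0).elim0
      simp [Fintype.card_eq_zero, stirling]
    | succ k =>
      rw [Fintype.card_congr (surjEquiv n k)]
      rw [Fintype.card_prod, Fintype.card_sum, Fintype.card_fin, ih (k + 1), ih k]
      rw [show stirling (n+1) (k+1) = (k + 1) * stirling n (k + 1) + stirling n k from rfl]
      rw [Nat.factorial_succ]
      ring

lemma card_surj (α : Type*) [Fintype α] [DecidableEq α] (k : ℕ) :
    Fintype.card {f : α → Fin k // Surjective f}
      = stirling (Fintype.card α) k * k.factorial := by
  rw [← card_surj_fin (Fintype.card α) k]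
  exact Fintype.card_congr (Equiv.subtypeEquiv
    (Equiv.arrowCongr (Fintype.equivFin α) (Equiv.refl _))
    (fun f => by
      constructor
      · intro hf b
        rcases hf b with ⟨a, ha⟩
        exact ⟨Fintype.equivFin α a, by simpa [Equiv.arrowCongr] using ha⟩
      · intro hf b
        rcases hf b with ⟨i, hi⟩
        exact ⟨(Fintype.equivFin α).symm i, by simpa [Equiv.arrowCongr] using hi⟩))

section G
variable {d k r : ℕ}

lemma sum_arith (hk : k ≤ d) (hr : r ≤ d) :
    ∑ m ∈ range (d - r + 1), (d - r).choose m • (stirling (d - m) k * k.factorial)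
      = ∑ j ∈ Finset.Icc k d, (d - r).choose (d - j) * stirling j k * k.factorial := by
  calc ∑ m ∈ range (d - r + 1), (d - r).choose m • (stirling (d - m) k * k.factorial)
      = ∑ m ∈ range (d + 1), (d - r).choose m • (stirling (d - m) k * k.factorial) :=
        Finset.sum_subset (Finset.range_subset_range.2 (by omega)) (fun m _ hm => by
          rw [Nat.choose_eq_zero_of_lt (by simp only [mem_range] at *; omega), zero_smul])
    _ = ∑ m ∈ range (d + 1),
          (fun j => (d - r).choose (d - j) * stirling j k * k.factorial) (d + 1 - 1 - m) := by
        apply Finset.sum_congr rfl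
        intro m hm
        simp only [mem_range] at hm
        have h1 : d + 1 - 1 - m = d - m := by omega
        have h2 : d - (d - m) = m := by omega
        show _ = (d - r).choose (d - (d + 1 - 1 - m)) * stirling (d + 1 - 1 - m) k * k.factorial
        rw [h1, h2, smul_eq_mul, mul_assoc]
    _ = ∑ j ∈ range (d + 1), (d - r).choose (d - j) * stirling j k * k.factorial := by
        exact Finset.sum_range_reflect
          (fun j => (d - r).choose (d - j) * stirling j k * k.factorial) (d + 1)
    _ = ∑ j ∈ Finset.Icc k d, (d - r).choose (d - j) * stirling j k * k.factorial := by
        symm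
        apply Finset.sum_subset
        · intro j hj; simp only [mem_Icc, mem_range] at *; omega
        · intro j hj hj2
          simp only [mem_range] at hj
          simp only [mem_Icc] at hj2
          rw [stirling_eq_zero_of_lt (show j < k by omega), mul_zero, zero_mul]

lemma card_G (hd : 1 ≤ d) (hk : k ≤ d) (hr : r ≤ d) (v0 : Fin (d + 1)) (hv0 : (v0 : ℕ) = d - r) :
    Nat.card {g : Fin (d + 1) → Fin (k + 1) //
        Surjective g ∧ g v0 = Fin.last k ∧ ∀ v, g v = Fin.last k → v ≤ v0} =
      ∑ j ∈ Finset.Icc k d, (d - r).choose (d - j) * stirling j k * k.factorial := by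
  classical
  rw [Nat.card_eq_fintype_card, Fintype.card_subtype]
  rw [card_eq_sum_card_fiberwise (f := fun g : Fin (d + 1) → Fin (k + 1) =>
      univ.filter (fun v => g v = Fin.last k ∧ v ≠ v0)) (t := (Iio v0).powerset)
    (by
      intro g hg
      simp only [mem_coe, mem_filter, mem_univ, true_and] at hg
      rw [mem_coe, mem_powerset]
      intro v hv
      simp only [mem_filter, mem_univ, true_and] at hv
      exact mem_Iio.2 (lt_of_le_of_ne (hg.2.2 v hv.1) hv.2))]
  have hfiber : ∀ B ∈ (Iio v0).powerset,
      ((univ.filter (fun g : Fin (d + 1) → Fin (k + 1) =>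
          Surjective g ∧ g v0 = Fin.last k ∧ ∀ v, g v = Fin.last k → v ≤ v0)).filter
        (fun g => univ.filter (fun v => g v = Fin.last k ∧ v ≠ v0) = B)).card
      = stirling (d - B.card) k * k.factorial := by
    intro B hB
    rw [mem_powerset] at hB
    have hv0B : v0 ∉ B := fun h => lt_irrefl v0 (mem_Iio.1 (hB h))
    have hBne : ∀ v ∈ B, v ≠ v0 := fun v hv => ne_of_lt (mem_Iio.1 (hB hv))
    have hcard : Fintype.card {v : Fin (d + 1) // v ∉ insert v0 B} = d - B.card := by
      rw [Fintype.card_subtype]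
      have : univ.filter (fun v : Fin (d + 1) => v ∉ insert v0 B) = (insert v0 B)ᶜ := by
        ext v; simp
      rw [this, card_compl, card_insert_of_notMem hv0B, Fintype.card_fin]
      have : B.card ≤ (Iio v0).card := card_le_card hB
      rw [Fin.card_Iio] at this
      omega
    classical
    have e : {g : Fin (d + 1) → Fin (k + 1) //
        (Surjective g ∧ g v0 = Fin.last k ∧ ∀ v, g v = Fin.last k → v ≤ v0) ∧
          univ.filter (fun v => g v = Fin.last k ∧ v ≠ v0) = B} ≃
        {h : {v : Fin (d + 1) // v ∉ insert v0 B} → Fin k // Surjective h} := by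
      refine
      { toFun := fun gp => ⟨fun x => (gp.1 x.1).castPred ?_, ?_⟩
        invFun := fun hp => ⟨fun v => if hv : v ∈ insert v0 B then Fin.last k
            else ((hp.1 ⟨v, hv⟩).castSucc), ?_⟩
        left_inv := ?_
        right_inv := ?_ }
      · -- castPred proof
        intro hlast
        apply x.2
        rcases eq_or_ne x.1 v0 with h | h
        · exact mem_insert.2 (Or.inl h)
        · have hmem : x.1 ∈ univ.filter (fun w => gp.1 w = Fin.last k ∧ w ≠ v0) :=
            mem_filter.2 ⟨mem_univ _, hlast, h⟩
          rw [gp.2.2] at hmem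
          exact mem_insert_of_mem hmem
      · -- surjectivity of the restricted map
        intro c
        rcases gp.2.1.1 c.castSucc with ⟨v, hv⟩
        have hvB : v ∉ insert v0 B := by
          intro hmem
          rcases mem_insert.1 hmem with h | h
          · rw [h, gp.2.1.2.1] at hv
            exact absurd hv.symm (Fin.castSucc_lt_last c).ne
          · have h2 : v ∈ univ.filter (fun w => gp.1 w = Fin.last k ∧ w ≠ v0) := by
              rw [gp.2.2]; exact h
            rcases mem_filter.1 h2 with ⟨-, hlast, -⟩
            rw [hlast] at hv
            exact absurd hv.symm (Fin.castSucc_lt_last c).ne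
        refine ⟨⟨v, hvB⟩, ?_⟩
        simp only [hv]
        exact Fin.castPred_castSucc _
      · -- full property of reconstructed g
        refine ⟨⟨?_, dif_pos (mem_insert_self _ _), ?_⟩, ?_⟩
        · intro b
          rcases Fin.eq_castSucc_or_eq_last b with ⟨c, rfl⟩ | rfl
          · rcases hp.2 c with ⟨x, hx⟩
            refine ⟨x.1, ?_⟩
            simp only [dif_neg x.2]
            rw [show (⟨(x : Fin (d+1)), x.2⟩ : {v : Fin (d + 1) // v ∉ insert v0 B}) = x from rfl, hx]
          · exact ⟨v0, dif_pos (mem_insert_self _ _)⟩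
        · intro v hv
          by_cases hmem : v ∈ insert v0 B
          · rcases mem_insert.1 hmem with h' | h'
            · exact le_of_eq h'
            · exact le_of_lt (mem_Iio.1 (hB h'))
          · simp only [dif_neg hmem] at hv
            exact absurd hv (Fin.castSucc_lt_last _).ne
        · ext v
          simp only [mem_filter, mem_univ, true_and]
          constructor
          · rintro ⟨hlast, hne⟩
            by_cases hmem : v ∈ insert v0 B
            · rcases mem_insert.1 hmem with h' | h'
              · exact absurd h' hne
              · exact h'
            · simp only [dif_neg hmem] at hlast
              exact absurd hlast (Fin.castSucc_lt_last _).ne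
          · intro hv
            exact ⟨dif_pos (mem_insert_of_mem hv), hBne v hv⟩
      · -- left_inv
        rintro ⟨g, ⟨hsurj, hgv0, hmax⟩, hgB⟩
        apply Subtype.ext
        funext v
        show (if hv : v ∈ insert v0 B then Fin.last k else _) = g v
        by_cases hmem : v ∈ insert v0 B
        · rw [dif_pos hmem]
          rcases mem_insert.1 hmem with h' | h'
          · rw [h', hgv0]
          · have h2 : v ∈ univ.filter (fun w => g w = Fin.last k ∧ w ≠ v0) := by
              rw [hgB]; exact h'
            rcases mem_filter.1 h2 with ⟨-, hlast, -⟩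
            rw [hlast]
        · rw [dif_neg hmem, Fin.castSucc_castPred]
      · -- right_inv
        rintro ⟨h, hh⟩
        apply Subtype.ext
        funext x
        apply Fin.castSucc_injective
        rw [Fin.castSucc_castPred]
        show (if hv : x.1 ∈ insert v0 B then Fin.last k else ((h ⟨x.1, hv⟩).castSucc))
          = (h x).castSucc
        rw [dif_neg x.2]
    have hcount : ((univ.filter (fun g : Fin (d + 1) → Fin (k + 1) =>
          Surjective g ∧ g v0 = Fin.last k ∧ ∀ v, g v = Fin.last k → v ≤ v0)).filter
        (fun g => univ.filter (fun v => g v = Fin.last k ∧ v ≠ v0) = B)).card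
        = Fintype.card {g : Fin (d + 1) → Fin (k + 1) //
          (Surjective g ∧ g v0 = Fin.last k ∧ ∀ v, g v = Fin.last k → v ≤ v0) ∧
            univ.filter (fun v => g v = Fin.last k ∧ v ≠ v0) = B} := by
      rw [Fintype.card_subtype, Finset.filter_filter]
    rw [hcount, Fintype.card_congr e, card_surj, hcard]
  rw [Finset.sum_congr rfl hfiber]
  rw [Finset.sum_powerset_apply_card (fun m => stirling (d - m) k * k.factorial)]
  rw [Fin.card_Iio, hv0]
  exact sum_arith hk hr
end G


section cnt
variable {d : ℕ}

def cnt (S : Finset (Fin d)) (n : ℕ) : ℕ := (S.filter (fun s => s.val < n)).card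

lemma cnt_zero (S : Finset (Fin d)) : cnt S 0 = 0 := by simp [cnt]

lemma cnt_le_card (S : Finset (Fin d)) (n : ℕ) : cnt S n ≤ S.card := card_filter_le _ _

lemma cnt_mono (S : Finset (Fin d)) {n m : ℕ} (h : n ≤ m) : cnt S n ≤ cnt S m :=
  card_le_card (fun s hs => by
    simp only [cnt, mem_filter] at *
    exact ⟨hs.1, lt_of_lt_of_le hs.2 h⟩)

lemma cnt_succ (S : Finset (Fin d)) (i : Fin d) :
    cnt S ((i : ℕ) + 1) = cnt S (i : ℕ) + (if i ∈ S then 1 else 0) := by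
  classical
  have hsplit : S.filter (fun s => s.val < (i : ℕ) + 1)
      = S.filter (fun s => s.val < (i : ℕ)) ∪ S.filter (fun s => s = i) := by
    rw [← Finset.filter_or]
    apply Finset.filter_congr
    intro s _
    constructor
    · intro h
      rcases Nat.lt_succ_iff_lt_or_eq.1 h with h | h
      · exact Or.inl h
      · exact Or.inr (Fin.ext h)
    · rintro (h | rfl)
      · omega
      · omega
  have hdisj : Disjoint (S.filter (fun s => s.val < (i : ℕ))) (S.filter (fun s => s = i)) := by
    rw [Finset.disjoint_left]
    intro a ha hb
    simp only [mem_filter] at ha hb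
    rw [hb.2] at ha
    omega
  rw [cnt, hsplit, card_union_of_disjoint hdisj, Finset.filter_eq' S i]
  by_cases h : i ∈ S <;> simp [h, cnt]

lemma cnt_succ_le (S : Finset (Fin d)) (n : ℕ) : cnt S (n + 1) ≤ cnt S n + 1 := by
  classical
  have hsub : S.filter (fun s => s.val < n + 1)
      ⊆ S.filter (fun s => s.val < n) ∪ S.filter (fun s => s.val = n) := by
    intro s hs
    simp only [mem_filter, mem_union] at *
    rcases hs with ⟨h1, h2⟩
    rcases Nat.lt_succ_iff_lt_or_eq.1 h2 with h | h
    · exact Or.inl ⟨h1, h⟩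
    · exact Or.inr ⟨h1, h⟩
  have hone : (S.filter (fun s => s.val = n)).card ≤ 1 := by
    apply Finset.card_le_one.2
    intro a ha b hb
    simp only [mem_filter] at ha hb
    exact Fin.ext (ha.2.trans hb.2.symm)
  calc cnt S (n + 1) ≤ (S.filter (fun s => s.val < n) ∪ S.filter (fun s => s.val = n)).card :=
        card_le_card hsub
    _ ≤ cnt S n + (S.filter (fun s => s.val = n)).card := card_union_le _ _
    _ ≤ cnt S n + 1 := by omega

lemma cnt_last (S : Finset (Fin d)) : cnt S d = S.card := by
  rw [cnt, Finset.filter_true_of_mem]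
  intro s _
  exact s.2

lemma nat_ivt (f : ℕ → ℕ) (h0 : f 0 = 0) (hstep : ∀ n, f (n + 1) ≤ f n + 1) :
    ∀ (N c : ℕ), c ≤ f N → ∃ n ≤ N, f n = c := by
  intro N
  induction N with
  | zero => intro c hc; exact ⟨0, le_refl _, by omega⟩
  | succ N ih =>
    intro c hc
    by_cases h : c ≤ f N
    · rcases ih c h with ⟨n, hn, he⟩
      exact ⟨n, by omega, he⟩
    · have := hstep N
      exact ⟨N + 1, le_refl _, by omega⟩

end cnt

section key
variable {d k : ℕ}

def keyv (g : Fin (d + 1) → Fin (k + 1)) (v : Fin (d + 1)) : ℕ := (g v : ℕ) * (d + 1) + (v : ℕ)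

lemma keyv_inj (g : Fin (d + 1) → Fin (k + 1)) : Injective (keyv g) := by
  intro v w h
  unfold keyv at h
  have hv : ((g v : ℕ) * (d + 1) + (v : ℕ)) % (d + 1) = (v : ℕ) := by
    rw [Nat.mul_comm, Nat.mul_add_mod]
    exact Nat.mod_eq_of_lt v.2
  have hw : ((g w : ℕ) * (d + 1) + (w : ℕ)) % (d + 1) = (w : ℕ) := by
    rw [Nat.mul_comm, Nat.mul_add_mod]
    exact Nat.mod_eq_of_lt w.2
  apply Fin.ext
  rw [← hv, ← hw, h]

lemma keyv_le_g_le (g : Fin (d + 1) → Fin (k + 1)) {v w : Fin (d + 1)}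
    (h : keyv g v ≤ keyv g w) : (g v : ℕ) ≤ (g w : ℕ) := by
  by_contra hlt
  push_neg at hlt
  have h1 : (g w : ℕ) + 1 ≤ (g v : ℕ) := hlt
  have h2 : (v : ℕ) < d + 1 := v.2
  have h3 : (w : ℕ) < d + 1 := w.2
  unfold keyv at h
  nlinarith

lemma keyv_lt_of_g_eq (g : Fin (d + 1) → Fin (k + 1)) {v w : Fin (d + 1)}
    (hg : g v = g w) (h : keyv g v < keyv g w) : v < w := by
  unfold keyv at h
  rw [hg] at h
  have : (v : ℕ) < (w : ℕ) := by omega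
  exact this

def sortg (g : Fin (d + 1) → Fin (k + 1)) : Equiv.Perm (Fin (d + 1)) := Tuple.sort (keyv g)

lemma sortg_strictMono (g : Fin (d + 1) → Fin (k + 1)) : StrictMono (keyv g ∘ sortg g) :=
  (Tuple.monotone_sort (keyv g)).strictMono_of_injective
    ((keyv_inj g).comp (sortg g).injective)

lemma eq_sortg_of_strictMono (g : Fin (d + 1) → Fin (k + 1)) (σ : Equiv.Perm (Fin (d + 1)))
    (h : StrictMono (keyv g ∘ σ)) : σ = sortg g := by
  have he : keyv g ∘ σ = keyv g ∘ sortg g :=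
    Tuple.unique_monotone h.monotone (Tuple.monotone_sort (keyv g))
  apply Equiv.ext
  intro i
  exact keyv_inj g (congrFun he i)

end key

section hfun
variable {d k : ℕ} (g : Fin (d + 1) → Fin (k + 1))

lemma hfun_mono : Monotone (fun i => (g (sortg g i) : ℕ)) := by
  intro i j hij
  exact keyv_le_g_le g (((sortg_strictMono g).monotone) hij)

lemma hfun_mono' {i j : Fin (d + 1)} (hij : i ≤ j) :
    (g (sortg g i) : ℕ) ≤ (g (sortg g j) : ℕ) := hfun_mono g hij

lemma hfun_zero (hs : Surjective g) : (g (sortg g 0) : ℕ) = 0 := by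
  rcases hs 0 with ⟨v, hv⟩
  have h1 : (g (sortg g 0) : ℕ) ≤ (g (sortg g ((sortg g).symm v)) : ℕ) :=
    hfun_mono' g (Fin.zero_le _)
  rw [Equiv.apply_symm_apply, hv] at h1
  simpa using h1

lemma hfun_last (hs : Surjective g) : (g (sortg g (Fin.last d)) : ℕ) = k := by
  rcases hs (Fin.last k) with ⟨v, hv⟩
  have h1 : (g (sortg g ((sortg g).symm v)) : ℕ) ≤ (g (sortg g (Fin.last d)) : ℕ) :=
    hfun_mono' g (Fin.le_last _)
  rw [Equiv.apply_symm_apply, hv] at h1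
  have h2 : (g (sortg g (Fin.last d)) : ℕ) ≤ k := Nat.lt_succ_iff.1 (g _).2
  simp only [Fin.val_last] at h1
  omega

lemma hfun_step (hs : Surjective g) (i : Fin d) :
    (g (sortg g i.succ) : ℕ) ≤ (g (sortg g i.castSucc) : ℕ) + 1 := by
  by_contra hc
  push_neg at hc
  set c : ℕ := (g (sortg g i.castSucc) : ℕ) + 1 with hcdef
  have hck : c < k + 1 := by
    have : (g (sortg g i.succ) : ℕ) < k + 1 := (g _).2
    omega
  rcases hs ⟨c, hck⟩ with ⟨v, hv⟩
  set j := (sortg g).symm v with hj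
  have hgj0 : g (sortg g j) = ⟨c, hck⟩ := by rw [hj, Equiv.apply_symm_apply, hv]
  have hgj : (g (sortg g j) : ℕ) = c := by rw [hgj0]
  rcases le_or_gt j i.castSucc with h | h
  · have := hfun_mono' g h
    omega
  · have h2 : i.succ ≤ j := by
      rw [Fin.le_def]
      rw [Fin.lt_def] at h
      simp only [Fin.coe_castSucc] at h
      simp only [Fin.val_succ]
      omega
    have := hfun_mono' g h2
    omega

def S_of : Finset (Fin d) :=
  univ.filter (fun i : Fin d => g (sortg g i.castSucc) ≠ g (sortg g i.succ))

lemma cnt_S_of (hs : Surjective g) (i : Fin (d + 1)) :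
    cnt (S_of g) (i : ℕ) = (g (sortg g i) : ℕ) := by
  induction i using Fin.induction with
  | zero => rw [show ((0 : Fin (d + 1)) : ℕ) = 0 from rfl, cnt_zero, hfun_zero g hs]
  | succ i ih =>
    rw [Fin.val_succ, cnt_succ (S_of g) i]
    have hmono := hfun_mono' g (Fin.castSucc_le_succ i)
    have hstep := hfun_step g hs i
    by_cases hmem : i ∈ S_of g
    · have hne : g (sortg g i.castSucc) ≠ g (sortg g i.succ) := by
        simpa [S_of] using hmem
      have : (g (sortg g i.castSucc) : ℕ) ≠ (g (sortg g i.succ) : ℕ) :=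
        fun h => hne (Fin.ext h)
      rw [if_pos hmem]
      have ih' : cnt (S_of g) (i : ℕ) = (g (sortg g i.castSucc) : ℕ) := by
        rw [← ih]; simp
      rw [ih']
      omega
    · have hne : g (sortg g i.castSucc) = g (sortg g i.succ) := by
        by_contra hcon
        exact hmem (by simpa [S_of] using hcon)
      rw [if_neg hmem, add_zero]
      have ih' : cnt (S_of g) (i : ℕ) = (g (sortg g i.castSucc) : ℕ) := by
        rw [← ih]; simp
      rw [ih', hne]

lemma card_S_of (hs : Surjective g) : (S_of g).card = k := by
  have := cnt_S_of g hs (Fin.last d)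
  rw [Fin.val_last, cnt_last, hfun_last g hs] at this
  exact this

end hfun

section fwd
variable {d : ℕ}

lemma key_strictMono {S : Finset (Fin d)} {σ : Equiv.Perm (Fin (d + 1))}
    (hdes : ∀ m ∈ descSet σ, ∃ x ∈ S, (x : ℕ) = (m : ℕ)) :
    StrictMono (fun i : Fin (d + 1) => cnt S (i : ℕ) * (d + 1) + (σ i : ℕ)) := by
  rw [Fin.strictMono_iff_lt_succ]
  intro i
  simp only [Fin.coe_castSucc, Fin.val_succ]
  have hv1 : (σ i.castSucc : ℕ) < d + 1 := (σ i.castSucc).2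
  have hv2 : (σ i.succ : ℕ) < d + 1 := (σ i.succ).2
  by_cases hi : i ∈ S
  · have h1 : cnt S ((i : ℕ) + 1) = cnt S (i : ℕ) + 1 := by
      rw [cnt_succ, if_pos hi]
    rw [h1]
    have : (cnt S (i : ℕ) + 1) * (d + 1) = cnt S (i : ℕ) * (d + 1) + (d + 1) := by ring
    omega
  · have h1 : cnt S ((i : ℕ) + 1) = cnt S (i : ℕ) := by
      rw [cnt_succ, if_neg hi, add_zero]
    rw [h1]
    have hne : σ i.castSucc ≠ σ i.succ :=
      fun h => (Fin.castSucc_lt_succ (i := i)).ne (σ.injective h)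
    have hnotdesc : ¬ (σ i.succ < σ i.castSucc) := by
      intro hlt
      have hmem : i.castSucc ∈ descSet σ := by
        rw [descSet, mem_filter]
        exact ⟨mem_univ _, ⟨i.succ, by simp, hlt⟩⟩
      rcases hdes _ hmem with ⟨x, hx, hxval⟩
      simp only [Fin.coe_castSucc] at hxval
      have : x = i := Fin.ext hxval
      rw [this] at hx
      exact hi hx
    have : (σ i.castSucc : ℕ) < (σ i.succ : ℕ) := by
      rcases lt_or_gt_of_ne hne with h | h
      · exact h
      · exact absurd h hnotdesc
    omega

end fwd

section main
variable {d k r : ℕ}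

lemma card_T_eq_card_G (d k r : ℕ) (hd : 1 ≤ d) (hk : k ≤ d) (hr : r ≤ d) :
    Nat.card {p : Finset (Fin d) × Equiv.Perm (Fin (d + 1)) //
        p.1.card = k ∧
        (∀ m : Fin (d + 1), m ∈ descSet p.2 → ∃ x ∈ p.1, (x : ℕ) = (m : ℕ)) ∧
        ∀ q : Fin (d + 1), (q : ℕ) = d → (p.2 q : ℕ) + 1 + r = d + 1} =
      Nat.card {g : Fin (d + 1) → Fin (k + 1) //
        Surjective g ∧ g ⟨d - r, Nat.lt_succ_of_le (Nat.sub_le d r)⟩ = Fin.last k ∧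
        ∀ v, g v = Fin.last k → v ≤ ⟨d - r, Nat.lt_succ_of_le (Nat.sub_le d r)⟩} := by
  set v0 : Fin (d + 1) := ⟨d - r, Nat.lt_succ_of_le (Nat.sub_le d r)⟩ with hv0def
  have hv0 : (v0 : ℕ) = d - r := rfl
  apply Nat.card_congr
  refine
  { toFun := fun p => ⟨fun v => ⟨cnt p.1.1 ((p.1.2.symm v : Fin (d + 1)) : ℕ), ?_⟩, ?_, ?_, ?_⟩
    invFun := fun gp => ⟨(S_of gp.1, sortg gp.1), ?_, ?_, ?_⟩
    left_inv := ?_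
    right_inv := ?_ }
  · -- bound
    exact Nat.lt_succ_of_le (le_of_le_of_eq (cnt_le_card _ _) p.2.1)
  · -- surjectivity
    intro c
    have hck : (c : ℕ) ≤ k := Nat.lt_succ_iff.1 c.2
    have hle : (c : ℕ) ≤ cnt p.1.1 d := by
      rw [cnt_last, p.2.1]; exact hck
    obtain ⟨n, hn, he⟩ := nat_ivt (cnt p.1.1) (cnt_zero _) (cnt_succ_le _) d (c : ℕ) hle
    refine ⟨p.1.2 ⟨n, by omega⟩, ?_⟩
    apply Fin.ext
    show cnt p.1.1 ((p.1.2.symm (p.1.2 ⟨n, by omega⟩) : Fin (d + 1)) : ℕ) = (c : ℕ)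
    rw [Equiv.symm_apply_apply]
    exact he
  · -- g v0 = last
    have hσlast : p.1.2 (Fin.last d) = v0 := by
      have := p.2.2.2 (Fin.last d) (by simp)
      apply Fin.ext
      rw [hv0]
      omega
    apply Fin.ext
    show cnt p.1.1 ((p.1.2.symm v0 : Fin (d + 1)) : ℕ) = (Fin.last k : ℕ)
    rw [← hσlast, Equiv.symm_apply_apply, Fin.val_last, Fin.val_last, cnt_last, p.2.1]
  · -- max condition
    intro v hv
    have hσlast : p.1.2 (Fin.last d) = v0 := by
      have := p.2.2.2 (Fin.last d) (by simp)
      apply Fin.ext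
      rw [hv0]
      omega
    have hval : cnt p.1.1 ((p.1.2.symm v : Fin (d + 1)) : ℕ) = k := by
      have := congrArg Fin.val hv
      simpa using this
    set i := p.1.2.symm v with hi
    have hvi : p.1.2 i = v := p.1.2.apply_symm_apply v
    rcases eq_or_lt_of_le (Fin.le_last i) with h | h
    · rw [← hvi, h, hσlast]
    · have hstrict := key_strictMono p.2.2.1
      have hlt := hstrict h
      simp only at hlt
      have hcntl : cnt p.1.1 ((Fin.last d : Fin (d + 1)) : ℕ) = k := by
        rw [Fin.val_last, cnt_last, p.2.1]
      rw [hval, hcntl] at hlt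
      have hσ : (p.1.2 i : ℕ) < (p.1.2 (Fin.last d) : ℕ) := by omega
      rw [hvi, hσlast] at hσ
      exact le_of_lt hσ
  · -- card of S_of
    exact card_S_of gp.1 gp.2.1
  · -- descents contained
    intro m hm
    rw [descSet, mem_filter] at hm
    obtain ⟨-, m', hm'val, hlt⟩ := hm
    have hmd : (m : ℕ) < d := by
      have := m'.2
      omega
    set i : Fin d := ⟨(m : ℕ), hmd⟩ with hidef
    have hic : i.castSucc = m := Fin.ext (by simp [hidef])
    have his : i.succ = m' := Fin.ext (by simp [hidef, hm'val])
    refine ⟨i, ?_, by simp [hidef]⟩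
    rw [S_of, mem_filter]
    refine ⟨mem_univ _, ?_⟩
    intro heq
    have hklt : keyv gp.1 (sortg gp.1 i.castSucc) < keyv gp.1 (sortg gp.1 i.succ) :=
      sortg_strictMono gp.1 (Fin.castSucc_lt_succ (i := i))
    have := keyv_lt_of_g_eq gp.1 heq hklt
    rw [hic, his] at this
    exact absurd hlt (asymm this)
  · -- last condition
    intro q hq
    have hqlast : q = Fin.last d := Fin.ext (by simp [hq])
    subst hqlast
    have ha : gp.1 (sortg gp.1 (Fin.last d)) = Fin.last k :=
      Fin.ext (by rw [hfun_last gp.1 gp.2.1, Fin.val_last])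
    have hb : sortg gp.1 (Fin.last d) ≤ v0 := gp.2.2.2 _ ha
    have hc : v0 ≤ sortg gp.1 (Fin.last d) := by
      set j := (sortg gp.1).symm v0 with hj
      have hgj : gp.1 (sortg gp.1 j) = Fin.last k := by
        rw [hj, Equiv.apply_symm_apply]
        exact gp.2.2.1
      rcases eq_or_lt_of_le (Fin.le_last j) with h | h
      · rw [← h, hj, Equiv.apply_symm_apply]
      · have hklt : keyv gp.1 (sortg gp.1 j) < keyv gp.1 (sortg gp.1 (Fin.last d)) :=
          sortg_strictMono gp.1 h
        have := keyv_lt_of_g_eq gp.1 (hgj.trans ha.symm) hklt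
        rw [hj, Equiv.apply_symm_apply] at this
        exact le_of_lt this
    have heq : sortg gp.1 (Fin.last d) = v0 := le_antisymm hb hc
    rw [heq, hv0]
    omega
  · -- left inverse
    rintro ⟨⟨S, σ⟩, hcard, hdes, hlast⟩
    apply Subtype.ext
    show (S_of _, sortg _) = (S, σ)
    set g : Fin (d + 1) → Fin (k + 1) := fun v =>
      ⟨cnt S ((σ.symm v : Fin (d + 1)) : ℕ),
        Nat.lt_succ_of_le (le_of_le_of_eq (cnt_le_card _ _) hcard)⟩ with hgdef
    have hgval : ∀ i : Fin (d + 1), (g (σ i) : ℕ) = cnt S (i : ℕ) := by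
      intro i
      show cnt S ((σ.symm (σ i) : Fin (d + 1)) : ℕ) = cnt S (i : ℕ)
      rw [Equiv.symm_apply_apply]
    have hkey : keyv g ∘ σ = fun i : Fin (d + 1) => cnt S (i : ℕ) * (d + 1) + (σ i : ℕ) := by
      funext i
      show keyv g (σ i) = _
      unfold keyv
      rw [hgval]
    have hsort : σ = sortg g := by
      apply eq_sortg_of_strictMono
      rw [hkey]
      exact key_strictMono hdes
    have hS : S_of g = S := by
      ext i
      rw [S_of, mem_filter]
      rw [← hsort]
      have h1 : (g (σ i.castSucc) : ℕ) = cnt S (i : ℕ) := by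
        rw [hgval, Fin.coe_castSucc]
      have h2 : (g (σ i.succ) : ℕ) = cnt S ((i : ℕ) + 1) := by
        rw [hgval, Fin.val_succ]
      have hcnt := cnt_succ S i
      constructor
      · rintro ⟨-, hne⟩
        by_contra hni
        rw [if_neg hni, add_zero] at hcnt
        exact hne (Fin.ext (by rw [h1, h2, hcnt]))
      · intro hi
        refine ⟨mem_univ _, ?_⟩
        rw [if_pos hi] at hcnt
        intro heq
        have := congrArg Fin.val heq
        rw [h1, h2, hcnt] at this
        omega
    rw [hS, ← hsort]
  · -- right inverse
    rintro ⟨g, hsurj, h1, h2⟩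
    apply Subtype.ext
    funext v
    apply Fin.ext
    show cnt (S_of g) (((sortg g).symm v : Fin (d + 1)) : ℕ) = (g v : ℕ)
    rw [cnt_S_of g hsurj ((sortg g).symm v), Equiv.apply_symm_apply]

end main

/-- For `d ≥ 1`, `0 ≤ k ≤ d`, `0 ≤ r ≤ d`, the number of pairs `(S,σ)` with `S`
a `k`-subset of `{1,…,d}` (encoded as a `k`-subset of `Fin d`, the element `x`
standing for the value `x+1`), `σ ∈ S_{d+1}`, `D(σ) ⊆ S` and `σ(d+1) = d+1-r`
equals `Σ_{j=k}^{d} binom(d-r,d-j) · S(j,k) · k!`. -/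
theorem pairs_descents_count (d k r : ℕ) (hd : 1 ≤ d) (hk : k ≤ d) (hr : r ≤ d) :
    Nat.card {p : Finset (Fin d) × Equiv.Perm (Fin (d + 1)) //
        p.1.card = k ∧
        (∀ m : Fin (d + 1), m ∈ descSet p.2 → ∃ x ∈ p.1, (x : ℕ) = (m : ℕ)) ∧
        ∀ q : Fin (d + 1), (q : ℕ) = d → (p.2 q : ℕ) + 1 + r = d + 1} =
      ∑ j ∈ Finset.Icc k d, (d - r).choose (d - j) * stirling j k * k.factorial := by
  rw [card_T_eq_card_G d k r hd hk hr]
  exact card_G hd hk hr ⟨d - r, Nat.lt_succ_of_le (Nat.sub_le d r)⟩ rfl
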